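/- arXiv:2205.11440 — 2 statements merged into one kernel-verified Lean document; each statement's English description precedes it below -/
import Mathlib

section
/- Let α, λ > 0, K ≥ 2, and y ∈ ℝ. Suppose sequences F_1, …, F_K : ℕ → ℝ satisfy F_k(r) = (1/(α+λ))·(α·y + (λ/(K−1))·Σ_{k'≠k} F_{k'}(r−1)) for all r ≥ 1 and all k. Then for every k, F_k(r) → y as r → ∞. -/
open Filter Topology

theorem fd_students_converge (a l y : ℝ) (ha : 0 < a) (hl : 0 < l)
    (K : ℕ) (hK : 2 ≤ K) (F : Fin K → ℕ → ℝ)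
    (hF : ∀ k, ∀ r : ℕ, 1 ≤ r →
      F k r = (1 / (a + l)) *
        (a * y + (l / ((K : ℝ) - 1)) * ∑ k' ∈ Finset.univ.erase k, F k' (r - 1))) :
    ∀ k, Tendsto (F k) atTop (𝓝 y) := by
  have hK0 : (0:ℝ) < (K:ℝ) - 1 := by
    have : (2:ℝ) ≤ (K:ℝ) := by exact_mod_cast hK
    linarith
  have hal : 0 < a + l := by linarith
  have hne : (Finset.univ : Finset (Fin K)).Nonempty :=
    ⟨⟨0, by omega⟩, Finset.mem_univ _⟩
  set c := l / (a + l) with hc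
  have hc0 : 0 ≤ c := by positivity
  have hc1 : c < 1 := by rw [hc, div_lt_one hal]; linarith
  set M : ℕ → ℝ := fun r => Finset.univ.sup' hne (fun k => |F k r - y|) with hM
  have hle : ∀ k r, |F k r - y| ≤ M r := by
    intro k r
    exact Finset.le_sup' (fun k => |F k r - y|) (Finset.mem_univ k)
  have hMnn : ∀ r, 0 ≤ M r := fun r =>
    le_trans (abs_nonneg _) (hle hne.choose r)
  have key : ∀ r, M (r+1) ≤ c * M r := by
    intro r
    apply Finset.sup'_le
    intro k _
    have card : (Finset.univ.erase k).card = K - 1 := by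
      rw [Finset.card_erase_of_mem (Finset.mem_univ k), Finset.card_univ, Fintype.card_fin]
    have hcard : ((Finset.univ.erase k).card : ℝ) = (K:ℝ) - 1 := by
      rw [card]
      have h1 : 1 ≤ K := by omega
      push_cast [h1]; ring
    have hrw : F k (r+1) - y
        = (l/((a+l)*((K:ℝ)-1))) * ∑ k' ∈ Finset.univ.erase k, (F k' r - y) := by
      rw [hF k (r+1) (by omega)]
      simp only [Nat.add_sub_cancel]
      rw [Finset.sum_sub_distrib, Finset.sum_const, hcard, nsmul_eq_mul] at *
      field_simp
      rw [card, Nat.cast_sub (by omega : 1 ≤ K), Nat.cast_one]; ring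
    rw [hrw, abs_mul]
    have habs : |l/((a+l)*((K:ℝ)-1))| = l/((a+l)*((K:ℝ)-1)) := by
      apply abs_of_nonneg; positivity
    rw [habs]
    have hsum : |∑ k' ∈ Finset.univ.erase k, (F k' r - y)| ≤ ((K:ℝ)-1) * M r := by
      calc |∑ k' ∈ Finset.univ.erase k, (F k' r - y)|
          ≤ ∑ k' ∈ Finset.univ.erase k, |F k' r - y| := Finset.abs_sum_le_sum_abs _ _
        _ ≤ ∑ k' ∈ Finset.univ.erase k, M r :=
            Finset.sum_le_sum (fun i _ => hle i r)
        _ = ((K:ℝ)-1) * M r := by rw [Finset.sum_const, nsmul_eq_mul, hcard]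
    calc l/((a+l)*((K:ℝ)-1)) * |∑ k' ∈ Finset.univ.erase k, (F k' r - y)|
        ≤ l/((a+l)*((K:ℝ)-1)) * (((K:ℝ)-1) * M r) := by
          apply mul_le_mul_of_nonneg_left hsum; positivity
      _ = c * M r := by rw [hc]; field_simp
  have hgeo : ∀ r, M r ≤ c ^ r * M 0 := by
    intro r
    induction r with
    | zero => simp
    | succ n ih =>
      calc M (n+1) ≤ c * M n := key n
        _ ≤ c * (c ^ n * M 0) := by
            apply mul_le_mul_of_nonneg_left ih hc0
        _ = c ^ (n+1) * M 0 := by ring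
  have hzero : Tendsto (fun r => c ^ r * M 0) atTop (𝓝 0) := by
    have := tendsto_pow_atTop_nhds_zero_of_lt_one hc0 hc1
    simpa using this.mul_const (M 0)
  intro k
  rw [tendsto_iff_dist_tendsto_zero]
  apply squeeze_zero (fun r => dist_nonneg) (fun r => ?_) hzero
  calc dist (F k r) y = |F k r - y| := Real.dist_eq _ _
    _ ≤ M r := hle k r
    _ ≤ c ^ r * M 0 := hgeo r
end

section
/- Let α, λ > 0, K ≥ 2, and suppose a sequence (u_r) of real numbers satisfies the linear recurrence u_{r+1} = [(K−2)λ/((K−1)(α+λ))]·u_r + [λ²/((K−1)(α+λ)²)]·u_{r−1} + λ²αy/((K−1)(α+λ)²) + λαy/(α+λ) for all r ≥ 1. Then u_r → λ·y as r → ∞. -/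
open Filter Topology

theorem fd_recurrence_converges (a l y : ℝ) (ha : 0 < a) (hl : 0 < l)
    (K : ℕ) (hK : 2 ≤ K) (u : ℕ → ℝ)
    (hu : ∀ r : ℕ, 1 ≤ r →
      u (r + 1) = (((K : ℝ) - 2) * l / (((K : ℝ) - 1) * (a + l))) * u r
        + (l ^ 2 / (((K : ℝ) - 1) * (a + l) ^ 2)) * u (r - 1)
        + l ^ 2 * a * y / (((K : ℝ) - 1) * (a + l) ^ 2)
        + l * a * y / (a + l)) :
    Tendsto u atTop (𝓝 (l * y)) := by
  have hK2 : (2:ℝ) ≤ (K:ℝ) := by exact_mod_cast hK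
  have hal : 0 < a + l := by linarith
  have hK1 : (0:ℝ) < (K:ℝ) - 1 := by linarith
  set p : ℝ := ((K : ℝ) - 2) * l / (((K : ℝ) - 1) * (a + l)) with hpdef
  set q : ℝ := l ^ 2 / (((K : ℝ) - 1) * (a + l) ^ 2) with hqdef
  set ρ : ℝ := l / (a + l) with hρdef
  have hρ0 : 0 ≤ ρ := by positivity
  have hρ1 : ρ < 1 := by
    rw [hρdef, div_lt_one hal]; linarith
  have hp : 0 ≤ p := by
    apply div_nonneg (mul_nonneg (by linarith) hl.le)
    positivity
  have hq : 0 ≤ q := by positivity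
  have hpq : p + q ≤ ρ := by
    rw [hpdef, hqdef, hρdef, div_add_div _ _ (by positivity) (by positivity),
      div_le_div_iff₀ (by positivity) hal]
    nlinarith [mul_pos (mul_pos hK1 (pow_pos hal 2)) (mul_pos hl ha)]
  -- the shifted sequence
  set v : ℕ → ℝ := fun r => u r - l * y with hvdef
  have hv : ∀ r : ℕ, 1 ≤ r → v (r + 1) = p * v r + q * v (r - 1) := by
    intro r hr
    have h := hu r hr
    have hfix : p * (l * y) + q * (l * y)
        + l ^ 2 * a * y / (((K : ℝ) - 1) * (a + l) ^ 2) + l * a * y / (a + l) = l * y := by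
      rw [hpdef, hqdef]
      field_simp
      ring
    simp only [hvdef]
    calc u (r + 1) - l * y
        = (p * u r + q * u (r - 1)
            + l ^ 2 * a * y / (((K : ℝ) - 1) * (a + l) ^ 2) + l * a * y / (a + l))
          - (p * (l * y) + q * (l * y)
            + l ^ 2 * a * y / (((K : ℝ) - 1) * (a + l) ^ 2) + l * a * y / (a + l)) := by
          rw [← h, hfix]
      _ = p * (u r - l * y) + q * (u (r - 1) - l * y) := by ring
  set M : ℝ := max |v 1| |v 0| with hMdef
  have hM0 : 0 ≤ M := le_trans (abs_nonneg _) (le_max_left _ _)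
  have key : ∀ n : ℕ, |v (2 * n)| ≤ ρ ^ n * M ∧ |v (2 * n + 1)| ≤ ρ ^ n * M := by
    intro n
    induction n with
    | zero => simp [hMdef, le_max_right, le_max_left]
    | succ n ih =>
      obtain ⟨ih0, ih1⟩ := ih
      have hrec1 := hv (2 * n + 1) (by omega)
      have e1 : 2 * n + 1 - 1 = 2 * n := by omega
      rw [e1] at hrec1
      have hb2 : |v (2 * n + 2)| ≤ ρ ^ (n + 1) * M := by
        calc |v (2 * n + 1 + 1)| ≤ p * |v (2 * n + 1)| + q * |v (2 * n)| := by
              rw [hrec1]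
              refine le_trans (abs_add_le _ _) ?_
              rw [abs_mul, abs_mul, abs_of_nonneg hp, abs_of_nonneg hq]
          _ ≤ p * (ρ ^ n * M) + q * (ρ ^ n * M) := by
              gcongr
          _ = (p + q) * (ρ ^ n * M) := by ring
          _ ≤ ρ * (ρ ^ n * M) := by
              apply mul_le_mul_of_nonneg_right hpq (by positivity)
          _ = ρ ^ (n + 1) * M := by ring
      have hrec2 := hv (2 * n + 2) (by omega)
      have e2 : 2 * n + 2 - 1 = 2 * n + 1 := by omega
      rw [e2] at hrec2
      have hρn : ρ ^ (n + 1) ≤ ρ ^ n := pow_le_pow_of_le_one hρ0 hρ1.le (by omega)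
      have hb3 : |v (2 * n + 2 + 1)| ≤ ρ ^ (n + 1) * M := by
        calc |v (2 * n + 2 + 1)| ≤ p * |v (2 * n + 2)| + q * |v (2 * n + 1)| := by
              rw [hrec2]
              refine le_trans (abs_add_le _ _) ?_
              rw [abs_mul, abs_mul, abs_of_nonneg hp, abs_of_nonneg hq]
          _ ≤ p * (ρ ^ (n + 1) * M) + q * (ρ ^ n * M) := by gcongr
          _ ≤ p * (ρ ^ n * M) + q * (ρ ^ n * M) := by
              gcongr
          _ = (p + q) * (ρ ^ n * M) := by ring
          _ ≤ ρ * (ρ ^ n * M) := mul_le_mul_of_nonneg_right hpq (by positivity)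
          _ = ρ ^ (n + 1) * M := by ring
      constructor
      · have : 2 * (n + 1) = 2 * n + 1 + 1 := by omega
        rw [this]; exact hb2
      · have : 2 * (n + 1) + 1 = 2 * n + 2 + 1 := by omega
        rw [this]; exact hb3
  have bound : ∀ m : ℕ, |v m| ≤ ρ ^ (m / 2) * M := by
    intro m
    rcases Nat.even_or_odd m with ⟨k, hk⟩ | ⟨k, hk⟩
    · have : m = 2 * k := by omega
      subst this
      have : 2 * k / 2 = k := by omega
      rw [this]
      exact (key k).1
    · subst hk
      have : (2 * k + 1) / 2 = k := by omega
      rw [this]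
      exact (key k).2
  -- the bounding sequence tends to 0
  have hdiv : Tendsto (fun m : ℕ => m / 2) atTop atTop := by
    apply tendsto_atTop_atTop.mpr
    intro b
    exact ⟨2 * b, fun m hm => by omega⟩
  have hpow : Tendsto (fun n : ℕ => ρ ^ n) atTop (𝓝 0) :=
    tendsto_pow_atTop_nhds_zero_of_lt_one hρ0 hρ1
  have hbnd : Tendsto (fun m : ℕ => ρ ^ (m / 2) * M) atTop (𝓝 0) := by
    have := (hpow.comp hdiv).mul_const M
    simpa using this
  have habs : Tendsto (fun m => |v m|) atTop (𝓝 0) :=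
    squeeze_zero (fun m => abs_nonneg _) bound hbnd
  have hv0 : Tendsto v atTop (𝓝 0) :=
    (tendsto_zero_iff_abs_tendsto_zero v).mpr habs
  have : Tendsto (fun m => v m + l * y) atTop (𝓝 (0 + l * y)) :=
    hv0.add_const (l * y)
  simpa [hvdef] using this
end
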